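/- Let R be a ring and n a positive integer. A left R-module A is an n-syzygy module if and only if it is a Gorenstein n-syzygy module. -/

import Mathlib

universe u

open LinearMap

section GorensteinDefs

variable (S : Type u) [Ring S]

/-- A complete projective resolution: a doubly infinite exact sequence of projective
`S`-modules which stays exact after applying `Hom_S(-, Q)` for every projective module `Q`,
together with an identification of `G` with the image of the 0-th differential. -/
structure CompleteProjectiveResolution (G : Type u) [AddCommGroup G] [Module S G] where
  P : ℤ → Type u
  [acg : ∀ i, AddCommGroup (P i)]
  [mod : ∀ i, Module S (P i)]
  projective : ∀ i, Module.Projective S (P i)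
  d : ∀ i, P i →ₗ[S] P (i + 1)
  exact : ∀ i, LinearMap.range (d i) = LinearMap.ker (d (i + 1))
  homExact : ∀ (Q : Type u) [AddCommGroup Q] [Module S Q], Module.Projective S Q →
      ∀ i (f : P (i + 1) →ₗ[S] Q), f.comp (d i) = 0 →
        ∃ g : P (i + 1 + 1) →ₗ[S] Q, g.comp (d (i + 1)) = f
  equiv : Nonempty (G ≃ₗ[S] LinearMap.range (d 0))

attribute [instance] CompleteProjectiveResolution.acg CompleteProjectiveResolution.mod

/-- A module is Gorenstein projective if it admits a complete projective resolution. -/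
def IsGorensteinProjective (G : Type u) [AddCommGroup G] [Module S G] : Prop :=
  Nonempty (CompleteProjectiveResolution S G)

/-- An exact sequence `0 → G n → G (n-1) → ⋯ → G 1 → G 0 → M → 0` of `S`-modules,
encoded as an `ℕ`-indexed exact sequence whose entries in degrees `> n` are zero. -/
structure FiniteExactSequenceTo (M : Type u) [AddCommGroup M] [Module S M] (n : ℕ) where
  G : ℕ → Type u
  [acg : ∀ i, AddCommGroup (G i)]
  [mod : ∀ i, Module S (G i)]
  d : ∀ i, G (i + 1) →ₗ[S] G i
  aug : G 0 →ₗ[S] M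
  aug_surjective : Function.Surjective aug
  exact_aug : LinearMap.range (d 0) = LinearMap.ker aug
  exact : ∀ i, LinearMap.range (d (i + 1)) = LinearMap.ker (d i)
  trivial_of_gt : ∀ i, n < i → Subsingleton (G i)

attribute [instance] FiniteExactSequenceTo.acg FiniteExactSequenceTo.mod

/-- `M` admits an exact sequence `0 → G n → ⋯ → G 0 → M → 0` with all `G i`
Gorenstein projective. -/
def GorensteinProjectiveDimensionLE (M : Type u) [AddCommGroup M] [Module S M] (n : ℕ) : Prop :=
  ∃ E : FiniteExactSequenceTo S M n, ∀ i ≤ n, IsGorensteinProjective S (E.G i)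

/-- The Gorenstein projective dimension `Gpd_S(M)`, as an element of `ℕ∞`. -/
noncomputable def gpd (M : Type u) [AddCommGroup M] [Module S M] : ℕ∞ :=
  sInf {k : ℕ∞ | ∃ n : ℕ, k = n ∧ GorensteinProjectiveDimensionLE S M n}

/-- `M` admits an exact sequence `0 → P n → ⋯ → P 0 → M → 0` with all `P i` projective. -/
def ProjectiveDimensionLE (M : Type u) [AddCommGroup M] [Module S M] (n : ℕ) : Prop :=
  ∃ E : FiniteExactSequenceTo S M n, ∀ i ≤ n, Module.Projective S (E.G i)

/-- The projective dimension `pd_S(M)`, as an element of `ℕ∞`. -/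
noncomputable def pd (M : Type u) [AddCommGroup M] [Module S M] : ℕ∞ :=
  sInf {k : ℕ∞ | ∃ n : ℕ, k = n ∧ ProjectiveDimensionLE S M n}

end GorensteinDefs

/-- `A` is an `n`-syzygy module: there is an exact sequence
`0 → A → P_{n-1} → ⋯ → P₀ → M → 0` with all `P i` projective. -/
def IsNSyzygy (R : Type u) [Ring R] (n : ℕ) (A : Type u) [AddCommGroup A] [Module R A] : Prop :=
  ∃ (M : Type u) (_ : AddCommGroup M) (_ : Module R M) (E : FiniteExactSequenceTo R M n),
    (∀ i < n, Module.Projective R (E.G i)) ∧ Nonempty (A ≃ₗ[R] E.G n)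

/-- `A` is a Gorenstein `n`-syzygy module: there is an exact sequence
`0 → A → G_{n-1} → ⋯ → G₀ → M → 0` with all `G i` Gorenstein projective. -/
def IsGorensteinNSyzygy (R : Type u) [Ring R] (n : ℕ) (A : Type u)
    [AddCommGroup A] [Module R A] : Prop :=
  ∃ (M : Type u) (_ : AddCommGroup M) (_ : Module R M) (E : FiniteExactSequenceTo R M n),
    (∀ i < n, IsGorensteinProjective R (E.G i)) ∧ Nonempty (A ≃ₗ[R] E.G n)

namespace GorSyzAux

variable {R : Type u} [Ring R]

lemma submodule_eq_of_subsingleton {M : Type u} [AddCommGroup M] [Module R M]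
    [Subsingleton M] (S T : Submodule R M) : S = T := by
  ext x
  rw [Subsingleton.elim x 0]
  simp

lemma range_eq_bot_of_subsingleton {M N : Type u} [AddCommGroup M] [Module R M]
    [AddCommGroup N] [Module R N] [Subsingleton M] (f : M →ₗ[R] N) :
    LinearMap.range f = ⊥ := by
  rw [LinearMap.range_eq_bot]
  ext x
  rw [Subsingleton.elim x 0]
  simp

lemma gp_congr {M N : Type u} [AddCommGroup M] [Module R M] [AddCommGroup N] [Module R N]
    (e : M ≃ₗ[R] N) (h : IsGorensteinProjective R M) : IsGorensteinProjective R N := by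
  obtain ⟨res⟩ := h
  obtain ⟨e0⟩ := res.equiv
  exact ⟨{ res with equiv := ⟨e.symm.trans e0⟩ }⟩

lemma gp_of_subsingleton {M : Type u} [AddCommGroup M] [Module R M] [Subsingleton M] :
    IsGorensteinProjective R M := by
  have hproj : Module.Projective R M := by
    rw [Module.projective_def']
    exact ⟨0, by ext x; exact Subsingleton.elim _ _⟩
  refine ⟨{ P := fun _ => M
            acg := fun _ => inferInstance
            mod := fun _ => inferInstance
            projective := fun _ => hproj
            d := fun _ => LinearMap.id
            exact := fun i => submodule_eq_of_subsingleton _ _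
            homExact := ?_
            equiv := ?_ }⟩
  · intro Q _ _ hQ i f hf
    refine ⟨0, ?_⟩
    ext x
    rw [Subsingleton.elim x 0]
    simp
  · refine ⟨Submodule.topEquiv.symm.trans (LinearEquiv.ofEq _ _ ?_)⟩
    exact (submodule_eq_of_subsingleton _ _)

lemma gp_of_projective {M : Type u} [AddCommGroup M] [Module R M]
    (h : Module.Projective R M) : IsGorensteinProjective R M := by
  refine ⟨{ P := fun _ => M
            acg := fun _ => inferInstance
            mod := fun _ => inferInstance
            projective := fun _ => h
            d := fun i => if i % 2 = 0 then LinearMap.id else 0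
            exact := ?_
            homExact := ?_
            equiv := ?_ }⟩
  · intro i
    beta_reduce
    by_cases h2 : i % 2 = 0
    · rw [if_pos h2, if_neg (show ¬(i + 1) % 2 = 0 by omega)]
      simp
    · rw [if_neg h2, if_pos (show (i + 1) % 2 = 0 by omega)]
      simp
  · intro Q _ _ hQ i f hf
    beta_reduce
    beta_reduce at hf
    by_cases h2 : i % 2 = 0
    · rw [if_pos h2, LinearMap.comp_id] at hf
      refine ⟨0, ?_⟩
      rw [hf]
      simp
    · refine ⟨f, ?_⟩
      rw [if_pos (show (i + 1) % 2 = 0 by omega), LinearMap.comp_id]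
  · refine ⟨Submodule.topEquiv.symm.trans (LinearEquiv.ofEq _ _ ?_)⟩
    beta_reduce
    rw [if_pos (show (0 : ℤ) % 2 = 0 by norm_num), LinearMap.range_id]

lemma gp_embed {G : Type u} [AddCommGroup G] [Module R G] (h : IsGorensteinProjective R G) :
    ∃ (Q : Type u) (_ : AddCommGroup Q) (_ : Module R Q), Module.Projective R Q ∧
      ∃ ι : G →ₗ[R] Q, Function.Injective ι ∧
        IsGorensteinProjective R (Q ⧸ LinearMap.range ι) := by
  obtain ⟨res⟩ := h
  obtain ⟨e0⟩ := res.equiv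
  refine ⟨res.P 1, inferInstance, inferInstance, res.projective 1,
    (LinearMap.range (res.d 0)).subtype ∘ₗ e0.toLinearMap, ?_, ?_⟩
  · exact (Submodule.injective_subtype _).comp e0.injective
  · have hr : LinearMap.range ((LinearMap.range (res.d 0)).subtype ∘ₗ e0.toLinearMap)
        = LinearMap.range (res.d 0) := by
      rw [LinearMap.range_comp, LinearEquiv.range, Submodule.map_top, Submodule.range_subtype]
    rw [hr, res.exact 0]
    have hshift : IsGorensteinProjective R (LinearMap.range (res.d 1)) := by
      refine ⟨{ P := fun i => res.P (i + 1)
                acg := fun i => inferInstance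
                mod := fun i => inferInstance
                projective := fun i => res.projective (i + 1)
                d := fun i => res.d (i + 1)
                exact := fun i => res.exact (i + 1)
                homExact := ?_
                equiv := ⟨LinearEquiv.refl _ _⟩ }⟩
      intro Q _ _ hQ i f hf
      exact res.homExact Q hQ (i + 1) f hf
    exact gp_congr (res.d 1).quotKerEquivRange.symm hshift

/-- Ext¹(H, Q) = 0 packaged as a map extension property. -/
def ExtProp (R : Type u) [Ring R] (H : Type u) [AddCommGroup H] [Module R H] : Prop :=
  ∀ (C Q : Type u) [AddCommGroup C] [Module R C] [AddCommGroup Q] [Module R Q],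
    Module.Projective R Q → ∀ (π : C →ₗ[R] H), Function.Surjective π →
    ∀ φ : ↥(LinearMap.ker π) →ₗ[R] Q, ∃ Φ : C →ₗ[R] Q, ∀ x : LinearMap.ker π, Φ x = φ x

lemma extProp_of_gp {H : Type u} [AddCommGroup H] [Module R H]
    (h : IsGorensteinProjective R H) : ExtProp R H := by
  obtain ⟨res⟩ := h
  obtain ⟨e0⟩ := res.equiv
  intro C Q _ _ _ _ hQ π hπ φ
  set ε : res.P 0 →ₗ[R] H := e0.symm.toLinearMap ∘ₗ (res.d 0).rangeRestrict with hε
  have hεsurj : Function.Surjective ε :=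
    e0.symm.surjective.comp (LinearMap.surjective_rangeRestrict _)
  have hεker : ∀ x : res.P 0, ε x = 0 ↔ x ∈ LinearMap.ker (res.d 0) := by
    intro x
    rw [hε]
    simp only [LinearMap.coe_comp, Function.comp_apply, LinearEquiv.coe_coe,
      LinearEquiv.map_eq_zero_iff, Subtype.ext_iff, LinearMap.mem_ker]
    simp [Subtype.ext_iff]
  -- extension of maps on the kernel of ε to all of P 0
  have presExt : ∀ (f₀ : ↥(LinearMap.ker (res.d 0)) →ₗ[R] Q),
      ∃ g : res.P 0 →ₗ[R] Q, ∀ x : LinearMap.ker (res.d 0), g x = f₀ x := by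
    intro f₀
    have hmem : ∀ x : res.P (-1), res.d (-1) x ∈ LinearMap.ker (res.d 0) := by
      intro x
      have hx : res.d (-1) x ∈ LinearMap.range (res.d (-1)) := ⟨x, rfl⟩
      rw [res.exact (-1)] at hx
      exact hx
    set fc : res.P (-1) →ₗ[R] Q :=
      f₀ ∘ₗ LinearMap.codRestrict (LinearMap.ker (res.d 0)) (res.d (-1)) hmem with hfc
    have hzero : fc ∘ₗ res.d (-2) = 0 := by
      ext x
      have hx : res.d (-1) (res.d (-2) x) = 0 := by
        have hx2 : res.d (-2) x ∈ LinearMap.range (res.d (-2)) := ⟨x, rfl⟩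
        rw [res.exact (-2)] at hx2
        exact hx2
      have hcr : (LinearMap.codRestrict (LinearMap.ker (res.d 0)) (res.d (-1)) hmem)
          (res.d (-2) x) = 0 := by
        apply Subtype.ext
        simpa using hx
      simp only [hfc, LinearMap.comp_apply]
      have h2 := congrArg f₀ hcr
      rw [map_zero] at h2
      simpa using h2
    obtain ⟨g, hg⟩ := res.homExact Q hQ (-2) (show res.P (-2 + 1) →ₗ[R] Q from fc)
      (show _ ∘ₗ res.d (-2) = 0 from hzero)
    have hg' : ∀ y : res.P (-1), g (res.d (-1) y) = fc y := fun y => DFunLike.congr_fun hg y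
    refine ⟨g, fun x => ?_⟩
    obtain ⟨y, hy⟩ : x.val ∈ (LinearMap.range (res.d (-1)) : Submodule R (res.P 0)) := by
      rw [res.exact (-1)]
      exact x.2
    calc g x.val = g (res.d (-1) y) := by rw [hy]
      _ = fc y := hg' y
      _ = f₀ ⟨res.d (-1) y, hmem y⟩ := rfl
      _ = f₀ x := by
          congr 1
          exact Subtype.ext hy
  -- lift ε through π using projectivity of P 0
  have : Module.Projective R (res.P 0) := res.projective 0
  obtain ⟨σ, hσ⟩ := Module.projective_lifting_property π ε hπ
  have hσ' : ∀ y, π (σ y) = ε y := fun y => DFunLike.congr_fun hσ y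
  have hτmem : ∀ x : ↥(LinearMap.ker (res.d 0)),
      (σ ∘ₗ (LinearMap.ker (res.d 0)).subtype) x ∈ LinearMap.ker π := by
    intro x
    simp only [LinearMap.coe_comp, Function.comp_apply, Submodule.coe_subtype,
      LinearMap.mem_ker]
    rw [hσ' x.val]
    exact (hεker x.val).mpr x.2
  set τ : ↥(LinearMap.ker (res.d 0)) →ₗ[R] ↥(LinearMap.ker π) :=
    LinearMap.codRestrict _ _ hτmem with hτ
  obtain ⟨ψ, hψ⟩ := presExt (φ ∘ₗ τ)
  set s : (res.P 0 × ↥(LinearMap.ker π)) →ₗ[R] C :=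
    σ.coprod (LinearMap.ker π).subtype with hsdef
  have hs : Function.Surjective s := by
    intro c
    obtain ⟨p, hp⟩ := hεsurj (π c)
    have hmem2 : c - σ p ∈ LinearMap.ker π := by
      simp [LinearMap.mem_ker, map_sub, hσ' p, hp]
    exact ⟨(p, ⟨c - σ p, hmem2⟩), by simp [hsdef]⟩
  set t : (res.P 0 × ↥(LinearMap.ker π)) →ₗ[R] Q := ψ.coprod φ with htdef
  have hst : LinearMap.ker s ≤ LinearMap.ker t := by
    intro z hz
    simp only [LinearMap.mem_ker, hsdef, LinearMap.coprod_apply, Submodule.coe_subtype] at hz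
    have hp : z.1 ∈ LinearMap.ker (res.d 0) := by
      rw [← hεker]
      rw [← hσ' z.1]
      have : σ z.1 = - z.2.val := by
        rw [eq_neg_iff_add_eq_zero]
        exact hz
      rw [this, map_neg, z.2.2]
      simp
    have h1 : ψ z.1 = φ (τ ⟨z.1, hp⟩) := hψ ⟨z.1, hp⟩
    have h2 : τ ⟨z.1, hp⟩ + z.2 = 0 := by
      apply Subtype.ext
      simpa [hτ] using hz
    simp only [LinearMap.mem_ker, htdef, LinearMap.coprod_apply, h1]
    rw [← map_add, h2, map_zero]
  set Φ : C →ₗ[R] Q := ((LinearMap.ker s).liftQ t hst) ∘ₗ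
    (LinearMap.quotKerEquivOfSurjective s hs).symm.toLinearMap with hΦ
  have key : ∀ z, Φ (s z) = t z := by
    intro z
    have h1 : (LinearMap.quotKerEquivOfSurjective s hs).symm (s z)
        = Submodule.Quotient.mk z := by
      rw [LinearEquiv.symm_apply_eq]
      simp [LinearMap.quotKerEquivOfSurjective]
    simp [hΦ, h1]
  refine ⟨Φ, fun x => ?_⟩
  have h0 : s (0, x) = x.val := by simp [hsdef]
  have h1 : t (0, x) = φ x := by simp [htdef]
  rw [← h0, key (0, x), h1]

end GorSyzAux

/-- Iterated-extension closure of the class of Gorenstein projective modules. -/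
def Xcl (R : Type u) [Ring R] : ℕ → ∀ (X : Type u) [AddCommGroup X] [Module R X], Prop
  | 0 => fun X _ _ => IsGorensteinProjective R X
  | (k+1) => fun X _ _ => ∃ (X' X'' : Type u) (_ : AddCommGroup X') (_ : Module R X')
      (_ : AddCommGroup X'') (_ : Module R X'') (f : X' →ₗ[R] X) (g : X →ₗ[R] X''),
      Function.Injective f ∧ Function.Surjective g ∧
      LinearMap.range f = LinearMap.ker g ∧ Xcl R k X' ∧ Xcl R k X''

def IsX (R : Type u) [Ring R] (X : Type u) [AddCommGroup X] [Module R X] : Prop :=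
  ∃ k, Xcl R k X

namespace GorSyzAux

variable {R : Type u} [Ring R]

lemma xcl_of_subsingleton {X : Type u} [AddCommGroup X] [Module R X] [Subsingleton X] :
    ∀ k, Xcl R k X := by
  intro k
  induction k with
  | zero => exact gp_of_subsingleton
  | succ k ih =>
    exact ⟨X, X, inferInstance, inferInstance, inferInstance, inferInstance,
      LinearMap.id, LinearMap.id, fun a b h => Subsingleton.elim a b,
      fun y => ⟨y, rfl⟩, submodule_eq_of_subsingleton _ _, ih, ih⟩

lemma xcl_mono {k : ℕ} {X : Type u} [AddCommGroup X] [Module R X]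
    (h : Xcl R k X) : Xcl R (k+1) X := by
  refine ⟨X, PUnit.{u+1}, inferInstance, inferInstance, inferInstance, inferInstance,
    LinearMap.id, 0, fun a b h => h, fun y => ⟨0, Subsingleton.elim _ _⟩, ?_, h,
    xcl_of_subsingleton k⟩
  rw [LinearMap.range_id, LinearMap.ker_zero]

lemma xcl_le {k l : ℕ} (hkl : k ≤ l) {X : Type u} [AddCommGroup X] [Module R X]
    (h : Xcl R k X) : Xcl R l X := by
  induction hkl with
  | refl => exact h
  | step _ ih => exact xcl_mono ih

lemma xcl_congr {k : ℕ} {X Y : Type u} [AddCommGroup X] [Module R X]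
    [AddCommGroup Y] [Module R Y] (e : X ≃ₗ[R] Y) (h : Xcl R k X) : Xcl R k Y := by
  cases k with
  | zero => exact gp_congr e h
  | succ k =>
    obtain ⟨X', X'', a1, a2, a3, a4, f, g, h1, h2, h3, h4, h5⟩ := h
    refine ⟨X', X'', a1, a2, a3, a4, e.toLinearMap ∘ₗ f, g ∘ₗ e.symm.toLinearMap,
      e.injective.comp h1, h2.comp e.symm.surjective, ?_, h4, h5⟩
    ext y
    simp only [LinearMap.mem_range, LinearMap.mem_ker, LinearMap.coe_comp,
      Function.comp_apply, LinearEquiv.coe_coe]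
    constructor
    · rintro ⟨x, rfl⟩
      rw [e.symm_apply_apply]
      have : f x ∈ LinearMap.ker g := by rw [← h3]; exact ⟨x, rfl⟩
      exact this
    · intro hy
      have : e.symm y ∈ LinearMap.range f := by rw [h3]; exact hy
      obtain ⟨x, hx⟩ := this
      exact ⟨x, by rw [hx, e.apply_symm_apply]⟩

lemma isX_of_gp {X : Type u} [AddCommGroup X] [Module R X]
    (h : IsGorensteinProjective R X) : IsX R X := ⟨0, h⟩

lemma isX_of_subsingleton {X : Type u} [AddCommGroup X] [Module R X] [Subsingleton X] :
    IsX R X := ⟨0, gp_of_subsingleton⟩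

lemma isX_congr {X Y : Type u} [AddCommGroup X] [Module R X]
    [AddCommGroup Y] [Module R Y] (e : X ≃ₗ[R] Y) (h : IsX R X) : IsX R Y := by
  obtain ⟨k, hk⟩ := h
  exact ⟨k, xcl_congr e hk⟩

lemma isX_ext {X' X X'' : Type u} [AddCommGroup X'] [Module R X']
    [AddCommGroup X] [Module R X] [AddCommGroup X''] [Module R X'']
    (f : X' →ₗ[R] X) (g : X →ₗ[R] X'') (h1 : Function.Injective f)
    (h2 : Function.Surjective g) (h3 : LinearMap.range f = LinearMap.ker g)
    (h4 : IsX R X') (h5 : IsX R X'') : IsX R X := by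
  obtain ⟨a, ha⟩ := h4
  obtain ⟨b, hb⟩ := h5
  exact ⟨max a b + 1, X', X'', inferInstance, inferInstance, inferInstance, inferInstance,
    f, g, h1, h2, h3, xcl_le (le_max_left a b) ha, xcl_le (le_max_right a b) hb⟩

lemma extProp_ext {X' X X'' : Type u} [AddCommGroup X'] [Module R X']
    [AddCommGroup X] [Module R X] [AddCommGroup X''] [Module R X'']
    (f : X' →ₗ[R] X) (g : X →ₗ[R] X'') (hinjf : Function.Injective f)
    (hsurjg : Function.Surjective g) (hrk : LinearMap.range f = LinearMap.ker g)
    (h' : ExtProp R X') (h'' : ExtProp R X'') : ExtProp R X := by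
  intro C Q _ _ _ _ hQ π hπ φ
  have hmemD : ∀ x : ↥(LinearMap.ker (g ∘ₗ π)),
      (π ∘ₗ (LinearMap.ker (g ∘ₗ π)).subtype) x ∈ LinearMap.range f := by
    intro x
    rw [hrk]
    have hx := x.2
    simp only [LinearMap.mem_ker, LinearMap.coe_comp, Function.comp_apply] at hx
    simp only [LinearMap.mem_ker, LinearMap.coe_comp, Function.comp_apply,
      Submodule.coe_subtype]
    exact hx
  set ef := LinearEquiv.ofInjective f hinjf with hef
  set π₁ : ↥(LinearMap.ker (g ∘ₗ π)) →ₗ[R] X' :=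
    ef.symm.toLinearMap ∘ₗ LinearMap.codRestrict (LinearMap.range f)
      (π ∘ₗ (LinearMap.ker (g ∘ₗ π)).subtype) hmemD with hπ₁
  have hπ₁val : ∀ x : ↥(LinearMap.ker (g ∘ₗ π)),
      f (π₁ x) = π x.val := by
    intro x
    rw [hπ₁]
    simp only [LinearMap.coe_comp, Function.comp_apply, LinearEquiv.coe_coe]
    have := ef.apply_symm_apply (LinearMap.codRestrict (LinearMap.range f)
      (π ∘ₗ (LinearMap.ker (g ∘ₗ π)).subtype) hmemD x)
    have hco : ∀ z : ↥(LinearMap.range f), (ef (ef.symm z)).val = z.val := fun z => by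
      rw [ef.apply_symm_apply]
    have h2 := hco (LinearMap.codRestrict (LinearMap.range f)
      (π ∘ₗ (LinearMap.ker (g ∘ₗ π)).subtype) hmemD x)
    calc f (ef.symm _) = (ef (ef.symm _)).val := by rw [hef]; rfl
      _ = π x.val := by rw [h2]; rfl
  have hπ₁surj : Function.Surjective π₁ := by
    intro x'
    obtain ⟨c, hc⟩ := hπ (f x')
    have hcD : c ∈ LinearMap.ker (g ∘ₗ π) := by
      have : f x' ∈ LinearMap.ker g := by rw [← hrk]; exact ⟨x', rfl⟩
      simp only [LinearMap.mem_ker, LinearMap.coe_comp, Function.comp_apply, hc]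
      simpa using this
    refine ⟨⟨c, hcD⟩, hinjf ?_⟩
    rw [hπ₁val ⟨c, hcD⟩]
    exact hc
  have hker₁ : ∀ x : ↥(LinearMap.ker (g ∘ₗ π)), π₁ x = 0 ↔ π x.val = 0 := by
    intro x
    constructor
    · intro hx
      rw [← hπ₁val x, hx, map_zero]
    · intro hx
      apply hinjf
      rw [hπ₁val x, hx, map_zero]
  have hj₁mem : ∀ y : ↥(LinearMap.ker π₁),
      ((LinearMap.ker (g ∘ₗ π)).subtype ∘ₗ (LinearMap.ker π₁).subtype) y
        ∈ LinearMap.ker π := by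
    intro y
    simp only [LinearMap.mem_ker, LinearMap.coe_comp, Function.comp_apply,
      Submodule.coe_subtype]
    exact (hker₁ y.val).mp y.2
  obtain ⟨Φ₁, hΦ₁⟩ := h' (↥(LinearMap.ker (g ∘ₗ π))) Q hQ π₁ hπ₁surj
    (φ ∘ₗ LinearMap.codRestrict (LinearMap.ker π)
      ((LinearMap.ker (g ∘ₗ π)).subtype ∘ₗ (LinearMap.ker π₁).subtype) hj₁mem)
  obtain ⟨Φ, hΦ⟩ := h'' C Q hQ (g ∘ₗ π) (hsurjg.comp hπ) Φ₁
  refine ⟨Φ, fun x => ?_⟩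
  have hx2 : x.val ∈ LinearMap.ker (g ∘ₗ π) := by
    simp only [LinearMap.mem_ker, LinearMap.coe_comp, Function.comp_apply]
    rw [show π x.val = 0 from x.2, map_zero]
  have hxk1 : (⟨x.val, hx2⟩ : ↥(LinearMap.ker (g ∘ₗ π))) ∈ LinearMap.ker π₁ := by
    rw [LinearMap.mem_ker]
    exact (hker₁ _).mpr x.2
  calc Φ x.val = Φ₁ ⟨x.val, hx2⟩ := hΦ ⟨x.val, hx2⟩
    _ = φ _ := hΦ₁ ⟨⟨x.val, hx2⟩, hxk1⟩
    _ = φ x := by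
        congr 1

lemma extProp_of_xcl : ∀ (k : ℕ) {X : Type u} [AddCommGroup X] [Module R X],
    Xcl R k X → ExtProp R X := by
  intro k
  induction k with
  | zero => exact fun {X} _ _ h => extProp_of_gp h
  | succ k ih =>
    intro X _ _ h
    obtain ⟨X', X'', a1, a2, a3, a4, f, g, h1, h2, h3, h4, h5⟩ := h
    exact extProp_ext f g h1 h2 h3 (ih h4) (ih h5)

lemma extProp_of_isX {X : Type u} [AddCommGroup X] [Module R X]
    (h : IsX R X) : ExtProp R X := by
  obtain ⟨k, hk⟩ := h
  exact extProp_of_xcl k hk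

lemma emb_of_xcl : ∀ (k : ℕ) {X : Type u} [AddCommGroup X] [Module R X], Xcl R k X →
    ∃ (Q : Type u) (_ : AddCommGroup Q) (_ : Module R Q), Module.Projective R Q ∧
      ∃ ι : X →ₗ[R] Q, Function.Injective ι ∧ IsX R (Q ⧸ LinearMap.range ι) := by
  intro k
  induction k with
  | zero =>
    intro X _ _ h
    obtain ⟨Q, a, m, hQ, ι, hι, hcok⟩ := gp_embed h
    exact ⟨Q, a, m, hQ, ι, hι, isX_of_gp hcok⟩
  | succ k ih =>
    intro X _ _ h
    obtain ⟨X', X'', a1, a2, a3, a4, f, g, hinjf, hsurjg, hrk, hX', hX''⟩ := h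
    obtain ⟨Q', aQ', mQ', hQ'p, ι', hι', hcok'⟩ := ih hX'
    obtain ⟨Q'', aQ'', mQ'', hQ''p, ι'', hι'', hcok''⟩ := ih hX''
    -- extend ι' ∘ f⁻¹ : ker g → Q' to Φ₀ : X → Q'
    have hef := LinearEquiv.ofInjective f hinjf
    have hefv : ∀ z : ↥(LinearMap.range f),
        f ((LinearEquiv.ofInjective f hinjf).symm z) = z.val := by
      intro z
      have h2 : ∀ w : X', ((LinearEquiv.ofInjective f hinjf) w).val = f w := fun w =>
        rfl
      rw [← h2, LinearEquiv.apply_symm_apply]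
    obtain ⟨Φ₀, hΦ₀⟩ := extProp_of_xcl k hX'' X Q' hQ'p g hsurjg
      (ι' ∘ₗ ((LinearEquiv.ofEq _ _ hrk.symm).trans
        (LinearEquiv.ofInjective f hinjf).symm).toLinearMap)
    have hΦ₀f : ∀ x' : X', Φ₀ (f x') = ι' x' := by
      intro x'
      have hmem : f x' ∈ LinearMap.ker g := by rw [← hrk]; exact ⟨x', rfl⟩
      have h1 := hΦ₀ ⟨f x', hmem⟩
      rw [h1]
      simp only [LinearMap.coe_comp, Function.comp_apply, LinearEquiv.coe_coe,
        LinearEquiv.trans_apply]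
      congr 1
      apply hinjf
      rw [hefv]
      rfl
    set Ψ : X →ₗ[R] Q' × Q'' := Φ₀.prod (ι'' ∘ₗ g) with hΨ
    have hgf : ∀ x' : X', g (f x') = 0 := by
      intro x'
      have : f x' ∈ LinearMap.ker g := by rw [← hrk]; exact ⟨x', rfl⟩
      simpa using this
    have hΨval : ∀ x, Ψ x = (Φ₀ x, ι'' (g x)) := fun x => rfl
    have hΨinj : Function.Injective Ψ := by
      rw [injective_iff_map_eq_zero]
      intro x hx
      rw [hΨ] at hx
      have h1 : Φ₀ x = 0 := congrArg Prod.fst hx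
      have h2 : ι'' (g x) = 0 := congrArg Prod.snd hx
      have h3 : g x = 0 := by
        apply hι''
        rw [h2, map_zero]
      obtain ⟨x', rfl⟩ : x ∈ LinearMap.range f := by
        rw [hrk]
        simpa using h3
      have h4 : ι' x' = 0 := by rw [← hΦ₀f, h1]
      have h5 : x' = 0 := by apply hι'; rw [h4, map_zero]
      rw [h5, map_zero]
    letI := hQ'p
    letI := hQ''p
    refine ⟨Q' × Q'', inferInstance, inferInstance, inferInstance, Ψ, hΨinj, ?_⟩
    -- the cokernel is an extension of the two cokernels
    set u : (Q' ⧸ LinearMap.range ι') →ₗ[R] ((Q' × Q'') ⧸ LinearMap.range Ψ) :=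
      Submodule.liftQ _ ((LinearMap.range Ψ).mkQ ∘ₗ LinearMap.inl R Q' Q'') (by
        rintro q' ⟨x', rfl⟩
        simp only [LinearMap.mem_ker, LinearMap.coe_comp, Function.comp_apply,
          LinearMap.coe_inl, Submodule.mkQ_apply, Submodule.Quotient.mk_eq_zero]
        refine ⟨f x', ?_⟩
        rw [hΨval, hΦ₀f, hgf, map_zero]) with hu
    set v : ((Q' × Q'') ⧸ LinearMap.range Ψ) →ₗ[R] (Q'' ⧸ LinearMap.range ι'') :=
      Submodule.liftQ _ ((LinearMap.range ι'').mkQ ∘ₗ LinearMap.snd R Q' Q'') (by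
        rintro t ⟨x, rfl⟩
        simp only [LinearMap.mem_ker, LinearMap.coe_comp, Function.comp_apply,
          Submodule.mkQ_apply, Submodule.Quotient.mk_eq_zero, hΨval, LinearMap.snd_apply]
        exact ⟨g x, rfl⟩) with hv
    have hinjU : Function.Injective u := by
      rw [← LinearMap.ker_eq_bot, Submodule.eq_bot_iff]
      intro y hy
      obtain ⟨q', rfl⟩ := Submodule.Quotient.mk_surjective _ y
      rw [LinearMap.mem_ker, hu, Submodule.liftQ_apply] at hy
      simp only [LinearMap.coe_comp, Function.comp_apply, LinearMap.coe_inl,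
        Submodule.mkQ_apply, Submodule.Quotient.mk_eq_zero] at hy
      obtain ⟨x, hx⟩ := hy
      have h2 : ι'' (g x) = 0 := congrArg Prod.snd (hx.trans rfl)
      have h3 : g x = 0 := by apply hι''; rw [h2, map_zero]
      obtain ⟨x', rfl⟩ : x ∈ LinearMap.range f := by
        rw [hrk]
        simpa using h3
      have h4 : q' = ι' x' := by
        have := congrArg Prod.fst hx
        rw [hΨval] at this
        simp only at this
        rw [← this, hΦ₀f]
      rw [Submodule.Quotient.mk_eq_zero]
      exact ⟨x', h4.symm⟩
    have hsurjV : Function.Surjective v := by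
      intro y
      obtain ⟨q'', rfl⟩ := Submodule.Quotient.mk_surjective _ y
      refine ⟨Submodule.Quotient.mk (0, q''), ?_⟩
      rw [hv, Submodule.liftQ_apply]
      rfl
    have hrange : LinearMap.range u = LinearMap.ker v := by
      apply le_antisymm
      · rintro y ⟨z, rfl⟩
        obtain ⟨q', rfl⟩ := Submodule.Quotient.mk_surjective _ z
        rw [LinearMap.mem_ker, hu, Submodule.liftQ_apply]
        rw [hv]
        simp only [LinearMap.coe_comp, Function.comp_apply, LinearMap.coe_inl,
          Submodule.mkQ_apply, Submodule.liftQ_apply, LinearMap.snd_apply,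
          Submodule.Quotient.mk_eq_zero]
        exact Submodule.zero_mem _
      · intro y hy
        obtain ⟨t, rfl⟩ := Submodule.Quotient.mk_surjective _ y
        rw [LinearMap.mem_ker, hv, Submodule.liftQ_apply] at hy
        simp only [LinearMap.coe_comp, Function.comp_apply, LinearMap.snd_apply,
          Submodule.mkQ_apply, Submodule.Quotient.mk_eq_zero] at hy
        obtain ⟨x'', hx''⟩ := hy
        obtain ⟨x, hx⟩ := hsurjg x''
        refine ⟨Submodule.Quotient.mk (t.1 - Φ₀ x), ?_⟩
        rw [hu, Submodule.liftQ_apply]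
        simp only [LinearMap.coe_comp, Function.comp_apply, LinearMap.coe_inl,
          Submodule.mkQ_apply]
        rw [← sub_eq_zero, ← Submodule.Quotient.mk_sub, Submodule.Quotient.mk_eq_zero]
        refine ⟨-x, ?_⟩
        rw [hΨval]
        apply Prod.ext
        · simp only [Prod.fst_sub, map_neg]
          abel
        · simp only [Prod.snd_sub, map_neg, hx, hx'']
          abel
    exact isX_ext u v hinjU hsurjV hrange hcok' hcok''

end GorSyzAux

/-- `C` sits at the end of an exact sequence of length `n` of Gorenstein projectives,
    in iterated-cokernel form. -/
def GSyz (R : Type u) [Ring R] : ℕ → ∀ (C : Type u) [AddCommGroup C] [Module R C], Prop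
  | 0 => fun _ _ _ => True
  | (n+1) => fun C _ _ => ∃ (G : Type u) (_ : AddCommGroup G) (_ : Module R G)
      (f : C →ₗ[R] G), IsGorensteinProjective R G ∧ Function.Injective f ∧
      GSyz R n (G ⧸ LinearMap.range f)

/-- `C` sits at the end of an exact sequence of length `n` of projectives. -/
def PSyz (R : Type u) [Ring R] : ℕ → ∀ (C : Type u) [AddCommGroup C] [Module R C], Prop
  | 0 => fun _ _ _ => True
  | (n+1) => fun C _ _ => ∃ (P : Type u) (_ : AddCommGroup P) (_ : Module R P)
      (f : C →ₗ[R] P), Module.Projective R P ∧ Function.Injective f ∧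
      PSyz R n (P ⧸ LinearMap.range f)

namespace GorSyzAux

variable {R : Type u} [Ring R]

lemma gsyz_congr {n : ℕ} {C C₂ : Type u} [AddCommGroup C] [Module R C]
    [AddCommGroup C₂] [Module R C₂] (e : C ≃ₗ[R] C₂) (h : GSyz R n C) : GSyz R n C₂ := by
  cases n with
  | zero => trivial
  | succ n =>
    obtain ⟨G, a, m, f, h1, h2, h3⟩ := h
    refine ⟨G, a, m, f ∘ₗ e.symm.toLinearMap, h1, h2.comp e.symm.injective, ?_⟩
    have hr : LinearMap.range (f ∘ₗ e.symm.toLinearMap) = LinearMap.range f := by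
      rw [LinearMap.range_comp, LinearEquiv.range, Submodule.map_top]
    rw [hr]
    exact h3

lemma main_step : ∀ (n : ℕ) (C C' : Type u) [AddCommGroup C] [Module R C]
    [AddCommGroup C'] [Module R C'] (ι : C →ₗ[R] C'), Function.Injective ι →
    IsX R (C' ⧸ LinearMap.range ι) → GSyz R n C → PSyz R n C' := by
  intro n
  induction n with
  | zero =>
    intro C C' _ _ _ _ ι hι hX h
    trivial
  | succ n ih =>
    intro C C' _ _ _ _ ι hι hX h
    obtain ⟨G, aG, mG, f, hGP, hinjf, hsyz⟩ := h
    -- the pushout of ι and f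
    set S : Submodule R (C' × G) := LinearMap.range (ι.prod (-f)) with hS
    set inG : G →ₗ[R] ((C' × G) ⧸ S) := S.mkQ ∘ₗ LinearMap.inr R C' G with hinG
    set inC' : C' →ₗ[R] ((C' × G) ⧸ S) := S.mkQ ∘ₗ LinearMap.inl R C' G with hinC'
    have hmemS : ∀ t : C' × G, t ∈ S ↔ ∃ c, ι c = t.1 ∧ -f c = t.2 := by
      intro t
      rw [hS]
      constructor
      · rintro ⟨c, rfl⟩
        exact ⟨c, rfl, rfl⟩
      · rintro ⟨c, h1, h2⟩
        exact ⟨c, Prod.ext h1 h2⟩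
    have hGlue : ∀ c : C, inC' (ι c) = inG (f c) := by
      intro c
      rw [hinC', hinG]
      simp only [LinearMap.coe_comp, Function.comp_apply, LinearMap.coe_inl,
        LinearMap.coe_inr, Submodule.mkQ_apply]
      rw [← sub_eq_zero, ← Submodule.Quotient.mk_sub, Submodule.Quotient.mk_eq_zero]
      rw [hmemS]
      exact ⟨c, by simp, by simp⟩
    have hinjG : Function.Injective inG := by
      rw [injective_iff_map_eq_zero]
      intro g hg
      rw [hinG] at hg
      simp only [LinearMap.coe_comp, Function.comp_apply, LinearMap.coe_inr,
        Submodule.mkQ_apply, Submodule.Quotient.mk_eq_zero] at hg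
      rw [hmemS] at hg
      obtain ⟨c, h1, h2⟩ := hg
      have hc : c = 0 := hι (by rw [h1, map_zero])
      rw [hc] at h2
      simpa using h2.symm
    have hinjC' : Function.Injective inC' := by
      rw [injective_iff_map_eq_zero]
      intro c' hc'
      rw [hinC'] at hc'
      simp only [LinearMap.coe_comp, Function.comp_apply, LinearMap.coe_inl,
        Submodule.mkQ_apply, Submodule.Quotient.mk_eq_zero] at hc'
      rw [hmemS] at hc'
      obtain ⟨c, h1, h2⟩ := hc'
      have hc : c = 0 := hinjf (by
        have h3 : -f c = 0 := by rw [h2]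
        have h4 : f c = 0 := by rw [← neg_neg (f c), h3, neg_zero]
        rw [h4, map_zero])
      rw [hc, map_zero] at h1
      exact h1.symm
    -- X is an extension of H = C'/C by G, hence in the class
    set g' : ((C' × G) ⧸ S) →ₗ[R] (C' ⧸ LinearMap.range ι) :=
      Submodule.liftQ S ((LinearMap.range ι).mkQ ∘ₗ LinearMap.fst R C' G) (by
        intro t ht
        rw [hmemS] at ht
        obtain ⟨c, h1, h2⟩ := ht
        simp only [LinearMap.mem_ker, LinearMap.coe_comp, Function.comp_apply,
          LinearMap.fst_apply, Submodule.mkQ_apply, Submodule.Quotient.mk_eq_zero]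
        exact ⟨c, h1⟩) with hg'
    have hg'surj : Function.Surjective g' := by
      intro y
      obtain ⟨c', rfl⟩ := Submodule.Quotient.mk_surjective _ y
      refine ⟨Submodule.Quotient.mk (c', 0), ?_⟩
      rw [hg', Submodule.liftQ_apply]
      rfl
    have hrangeG : LinearMap.range inG = LinearMap.ker g' := by
      apply le_antisymm
      · rintro y ⟨g, rfl⟩
        rw [LinearMap.mem_ker, hinG, hg']
        simp only [LinearMap.coe_comp, Function.comp_apply, LinearMap.coe_inr,
          Submodule.mkQ_apply, Submodule.liftQ_apply, LinearMap.fst_apply,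
          Submodule.Quotient.mk_eq_zero]
        exact Submodule.zero_mem _
      · intro y hy
        obtain ⟨t, rfl⟩ := Submodule.Quotient.mk_surjective _ y
        rw [LinearMap.mem_ker, hg', Submodule.liftQ_apply] at hy
        simp only [LinearMap.coe_comp, Function.comp_apply, LinearMap.fst_apply,
          Submodule.mkQ_apply, Submodule.Quotient.mk_eq_zero] at hy
        obtain ⟨c, hc⟩ := hy
        refine ⟨t.2 + f c, ?_⟩
        rw [hinG]
        simp only [LinearMap.coe_comp, Function.comp_apply, LinearMap.coe_inr,
          Submodule.mkQ_apply]
        rw [← sub_eq_zero, ← Submodule.Quotient.mk_sub, Submodule.Quotient.mk_eq_zero,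
          hmemS]
        refine ⟨-c, ?_, ?_⟩
        · simp [← hc]
        · simp
    have hXisX : IsX R ((C' × G) ⧸ S) :=
      isX_ext inG g' hinjG hg'surj hrangeG (isX_of_gp hGP) hX
    obtain ⟨k, hk⟩ := hXisX
    obtain ⟨Q, aQ, mQ, hQp, ιQ, hιQ, hYX⟩ := emb_of_xcl k hk
    set ι' : C' →ₗ[R] Q := ιQ ∘ₗ inC' with hι'
    have hinjι' : Function.Injective ι' := by
      rw [hι']
      exact hιQ.comp hinjC'
    -- the map j : B = G/C → B' = Q/C'
    have hwf : ∀ c : C, ((LinearMap.range ι').mkQ ∘ₗ ιQ ∘ₗ inG) (f c) = 0 := by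
      intro c
      simp only [LinearMap.coe_comp, Function.comp_apply, Submodule.mkQ_apply,
        Submodule.Quotient.mk_eq_zero]
      rw [← hGlue c]
      exact ⟨ι c, rfl⟩
    set j : (G ⧸ LinearMap.range f) →ₗ[R] (Q ⧸ LinearMap.range ι') :=
      Submodule.liftQ _ ((LinearMap.range ι').mkQ ∘ₗ ιQ ∘ₗ inG) (by
        rintro x ⟨c, rfl⟩
        exact hwf c) with hj
    have hinjj : Function.Injective j := by
      rw [← LinearMap.ker_eq_bot, Submodule.eq_bot_iff]
      intro y hy
      obtain ⟨g, rfl⟩ := Submodule.Quotient.mk_surjective _ y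
      rw [LinearMap.mem_ker, hj, Submodule.liftQ_apply] at hy
      simp only [LinearMap.coe_comp, Function.comp_apply, Submodule.mkQ_apply,
        Submodule.Quotient.mk_eq_zero] at hy
      obtain ⟨c', hc'⟩ := hy
      rw [hι'] at hc'
      simp only [LinearMap.coe_comp, Function.comp_apply] at hc'
      have h1 : inC' c' = inG g := hιQ hc'
      have h2 : inG g - inC' c' = 0 := by rw [h1, sub_self]
      rw [hinG, hinC'] at h2
      simp only [LinearMap.coe_comp, Function.comp_apply, LinearMap.coe_inr,
        LinearMap.coe_inl, Submodule.mkQ_apply] at h2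
      rw [← Submodule.Quotient.mk_sub, Submodule.Quotient.mk_eq_zero, hmemS] at h2
      obtain ⟨c, hcc1, hcc2⟩ := h2
      rw [Submodule.Quotient.mk_eq_zero]
      refine ⟨-c, ?_⟩
      have h3 : -f c = g - 0 := hcc2
      simp only [sub_zero] at h3
      rw [map_neg, h3]
    set v : (Q ⧸ LinearMap.range ι') →ₗ[R] (Q ⧸ LinearMap.range ιQ) :=
      Submodule.liftQ _ (LinearMap.range ιQ).mkQ (by
        rw [Submodule.ker_mkQ, hι']
        exact LinearMap.range_comp_le_range _ _) with hv
    have hsurjv : Function.Surjective v := by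
      intro y
      obtain ⟨q, rfl⟩ := Submodule.Quotient.mk_surjective _ y
      exact ⟨Submodule.Quotient.mk q, by rw [hv, Submodule.liftQ_apply]; rfl⟩
    have hrangej : LinearMap.range j = LinearMap.ker v := by
      apply le_antisymm
      · rintro y ⟨z, rfl⟩
        obtain ⟨g, rfl⟩ := Submodule.Quotient.mk_surjective _ z
        rw [LinearMap.mem_ker, hj, Submodule.liftQ_apply, hv]
        simp only [LinearMap.coe_comp, Function.comp_apply, Submodule.mkQ_apply,
          Submodule.liftQ_apply, Submodule.Quotient.mk_eq_zero]
        exact ⟨inG g, rfl⟩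
      · intro y hy
        obtain ⟨q, rfl⟩ := Submodule.Quotient.mk_surjective _ y
        rw [LinearMap.mem_ker, hv, Submodule.liftQ_apply] at hy
        simp only [Submodule.mkQ_apply, Submodule.Quotient.mk_eq_zero] at hy
        obtain ⟨x, rfl⟩ := hy
        obtain ⟨t, rfl⟩ := Submodule.Quotient.mk_surjective _ x
        have hxsplit : (Submodule.Quotient.mk t : (C' × G) ⧸ S) = inC' t.1 + inG t.2 := by
          rw [hinC', hinG]
          simp only [LinearMap.coe_comp, Function.comp_apply, LinearMap.coe_inl,
            LinearMap.coe_inr, Submodule.mkQ_apply]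
          rw [← Submodule.Quotient.mk_add]
          congr 1
          exact Prod.ext (by simp) (by simp)
        refine ⟨Submodule.Quotient.mk t.2, ?_⟩
        rw [hj, Submodule.liftQ_apply]
        simp only [LinearMap.coe_comp, Function.comp_apply, Submodule.mkQ_apply]
        rw [← sub_eq_zero, ← Submodule.Quotient.mk_sub, Submodule.Quotient.mk_eq_zero]
        rw [hxsplit, map_add]
        refine ⟨-t.1, ?_⟩
        rw [hι']
        simp only [LinearMap.coe_comp, Function.comp_apply, map_neg]
        abel
    -- the cokernel of j is isomorphic to Y = Q / X
    have hcokj : IsX R ((Q ⧸ LinearMap.range ι') ⧸ LinearMap.range j) := by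
      set vbar : ((Q ⧸ LinearMap.range ι') ⧸ LinearMap.range j) →ₗ[R]
          (Q ⧸ LinearMap.range ιQ) := Submodule.liftQ _ v (le_of_eq hrangej) with hvbar
      have hbij : Function.Bijective vbar := by
        constructor
        · rw [← LinearMap.ker_eq_bot, Submodule.eq_bot_iff]
          intro y hy
          obtain ⟨b', rfl⟩ := Submodule.Quotient.mk_surjective _ y
          rw [LinearMap.mem_ker, hvbar, Submodule.liftQ_apply] at hy
          rw [Submodule.Quotient.mk_eq_zero, hrangej]
          exact hy
        · intro y
          obtain ⟨b', rfl⟩ := hsurjv y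
          exact ⟨Submodule.Quotient.mk b', by rw [hvbar, Submodule.liftQ_apply]⟩
      exact isX_congr (LinearEquiv.ofBijective vbar hbij).symm hYX
    have hB' := ih (G ⧸ LinearMap.range f) (Q ⧸ LinearMap.range ι') j hinjj hcokj hsyz
    exact ⟨Q, aQ, mQ, ι', hQp, hinjι', hB'⟩

end GorSyzAux

namespace GorSyzAux

variable {R : Type u} [Ring R]

lemma cochain_of_psyz : ∀ (n : ℕ) (C : Type u) [AddCommGroup C] [Module R C],
    PSyz R n C →
    ∃ (H : ℕ → Type u) (_ : ∀ i, AddCommGroup (H i)) (_ : ∀ i, Module R (H i))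
      (u : ∀ i, H i →ₗ[R] H (i+1)),
      Nonempty (C ≃ₗ[R] H 0) ∧ (∀ i, 0 < i → i ≤ n → Module.Projective R (H i)) ∧
      (0 < n → Function.Injective (u 0)) ∧
      (∀ i, i + 2 ≤ n → LinearMap.range (u i) = LinearMap.ker (u (i+1))) := by
  intro n
  induction n with
  | zero =>
    intro C _ _ _
    exact ⟨fun _ => C, fun _ => inferInstance, fun _ => inferInstance, fun _ => 0,
      ⟨LinearEquiv.refl R C⟩, fun i h1 h2 => absurd h2 (by omega),
      fun h => absurd h (by omega), fun i h => absurd h (by omega)⟩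
  | succ n ih =>
    intro C _ _ h
    obtain ⟨P, aP, mP, f, hPproj, hinjf, hrest⟩ := h
    obtain ⟨H, aH, mH, u, ⟨e⟩, hproj, hinj, hexact⟩ := ih (P ⧸ LinearMap.range f) hrest
    refine ⟨fun i => match i with | 0 => C | 1 => P | (j+2) => H (j+1),
      fun i => match i with | 0 => inferInstance | 1 => inferInstance | (j+2) => inferInstance,
      fun i => match i with | 0 => inferInstance | 1 => inferInstance | (j+2) => inferInstance,
      fun i => match i with
        | 0 => f
        | 1 => u 0 ∘ₗ e.toLinearMap ∘ₗ (LinearMap.range f).mkQ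
        | (j+2) => u (j+1),
      ⟨LinearEquiv.refl R C⟩, ?_, ?_, ?_⟩
    · rintro (_|_|j) h1 h2
      · omega
      · exact hPproj
      · exact hproj (j+1) (by omega) (by omega)
    · intro _
      exact hinjf
    · rintro (_|_|j) hij
      · -- exactness at P
        have hn1 : 0 < n := by omega
        apply le_antisymm
        · rintro x ⟨c, rfl⟩
          simp only [LinearMap.mem_ker, LinearMap.coe_comp, Function.comp_apply,
            Submodule.mkQ_apply]
          have h0 : (Submodule.Quotient.mk (f c) : P ⧸ LinearMap.range f) = 0 := by
            rw [Submodule.Quotient.mk_eq_zero]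
            exact ⟨c, rfl⟩
          rw [h0, map_zero, map_zero]
        · intro x hx
          simp only [LinearMap.mem_ker, LinearMap.coe_comp, Function.comp_apply,
            Submodule.mkQ_apply] at hx
          have h1 : e (Submodule.Quotient.mk x) = 0 := by
            apply hinj hn1
            rw [map_zero]
            exact hx
          have h2 : (Submodule.Quotient.mk x : P ⧸ LinearMap.range f) = 0 := by
            apply e.injective
            rw [map_zero]
            exact h1
          rw [Submodule.Quotient.mk_eq_zero] at h2
          exact h2
      · -- exactness at H 1
        have hcomp : LinearMap.range (u 0 ∘ₗ e.toLinearMap ∘ₗ (LinearMap.range f).mkQ)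
            = LinearMap.range (u 0) := by
          apply le_antisymm
          · exact LinearMap.range_comp_le_range _ _
          · rintro y ⟨z, rfl⟩
            obtain ⟨w, hw⟩ := e.surjective z
            obtain ⟨p, hp⟩ := Submodule.Quotient.mk_surjective _ w
            refine ⟨p, ?_⟩
            simp only [LinearMap.coe_comp, Function.comp_apply, Submodule.mkQ_apply]
            rw [hp]
            exact congrArg (u 0) hw
        rw [hcomp]
        exact hexact 0 (by omega)
      · exact hexact (j+1) (by omega)

end GorSyzAux

/-- Transport along an equality of indices. -/
def castEquiv {R : Type u} [Ring R] (H : ℕ → Type u) [∀ i, AddCommGroup (H i)]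
    [∀ i, Module R (H i)] {a b : ℕ} (h : a = b) : H a ≃ₗ[R] H b := by
  subst h
  exact LinearEquiv.refl R (H a)

namespace GorSyzAux

variable {R : Type u} [Ring R]

lemma castEquiv_map_ker {H : ℕ → Type u} [∀ i, AddCommGroup (H i)]
    [∀ i, Module R (H i)] (u : ∀ i, H i →ₗ[R] H (i+1)) {a b : ℕ} (h : a = b) :
    Submodule.map (castEquiv (R := R) H h).toLinearMap (LinearMap.ker (u a))
      = LinearMap.ker (u b) := by
  subst h
  show Submodule.map (LinearEquiv.refl R (H a)).toLinearMap _ = _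
  simp

lemma u_inj_congr {H : ℕ → Type u} [∀ i, AddCommGroup (H i)]
    [∀ i, Module R (H i)] (u : ∀ i, H i →ₗ[R] H (i+1)) {a b : ℕ} (h : a = b)
    (hb : Function.Injective (u b)) : Function.Injective (u a) := by
  subst h
  exact hb

lemma castEquiv_eq_zero_iff {H : ℕ → Type u} [∀ i, AddCommGroup (H i)]
    [∀ i, Module R (H i)] {a b : ℕ} (h : a = b) (x : H a) :
    castEquiv (R := R) H h x = 0 ↔ x = 0 := LinearEquiv.map_eq_zero_iff _

lemma isNSyzygy_of_psyz {n : ℕ} (hn : 0 < n) {A : Type u} [AddCommGroup A] [Module R A]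
    (h : PSyz R n A) : IsNSyzygy R n A := by
  obtain ⟨m, rfl⟩ : ∃ m, n = m + 1 := ⟨n - 1, by omega⟩
  obtain ⟨H, aH, mH, u, ⟨e⟩, hproj, hinj, hexact⟩ := cochain_of_psyz (m+1) A h
  -- the submodule family: everything in degrees ≤ m+1, zero above
  set Sf : ∀ i : ℕ, Submodule R (H (m+1-i)) :=
    fun i => if i ≤ m+1 then ⊤ else ⊥ with hSf
  have hStop : ∀ i, i ≤ m+1 → Sf i = ⊤ := fun i hi => if_pos hi
  have hSbot : ∀ i, m+1 < i → Sf i = ⊥ := fun i hi => if_neg (by omega)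
  have hsub : ∀ i, m+1 < i → Subsingleton ↥(Sf i) := by
    intro i hi
    have hb0 := (Submodule.eq_bot_iff (Sf i)).mp (hSbot i hi)
    refine ⟨fun a b => Subtype.ext ?_⟩
    rw [hb0 a.val a.2, hb0 b.val b.2]
  -- the differentials
  set δ : ∀ i : ℕ, H (m+1-(i+1)) →ₗ[R] H (m+1-i) := fun i =>
    if hi : i < m+1 then
      (castEquiv H (show m+1-(i+1)+1 = m+1-i by omega)).toLinearMap ∘ₗ u (m+1-(i+1))
    else 0 with hδ
  have hδpos : ∀ i, ∀ hi : i < m+1,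
      δ i = (castEquiv H (show m+1-(i+1)+1 = m+1-i by omega)).toLinearMap
        ∘ₗ u (m+1-(i+1)) := by
    intro i hi
    rw [hδ]
    exact dif_pos hi
  have hmapd : ∀ i : ℕ, ∀ x ∈ Sf (i+1), δ i x ∈ Sf i := by
    intro i x hx
    by_cases hi : i ≤ m+1
    · rw [hStop i hi]
      trivial
    · rw [hSbot (i+1) (by omega)] at hx
      rw [Submodule.mem_bot] at hx
      rw [hx, map_zero]
      exact Submodule.zero_mem _
  set D : ∀ i : ℕ, ↥(Sf (i+1)) →ₗ[R] ↥(Sf i) :=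
    fun i => (δ i).restrict (hmapd i) with hD
  have hDval : ∀ i (y : ↥(Sf (i+1))), ((D i) y : H (m+1-i)) = δ i y.val := by
    intro i y
    rw [hD]
    rfl
  refine ⟨(H (m+1)) ⧸ LinearMap.range (u m), inferInstance, inferInstance,
    { G := fun i => ↥(Sf i)
      acg := fun i => inferInstance
      mod := fun i => inferInstance
      d := D
      aug := (LinearMap.range (u m)).mkQ ∘ₗ (Sf 0).subtype
      aug_surjective := ?_
      exact_aug := ?_
      exact := ?_
      trivial_of_gt := fun i hi => hsub i hi }, ?_, ?_⟩
  · -- aug surjective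
    intro y
    obtain ⟨x, rfl⟩ := Submodule.Quotient.mk_surjective _ y
    refine ⟨⟨x, ?_⟩, rfl⟩
    rw [hStop 0 (by omega)]
    trivial
  · -- exact_aug
    have hδ0 : ∀ x : H (m+1-1), δ 0 x = u m x := by
      intro x
      rw [hδpos 0 (by omega)]
      rfl
    apply le_antisymm
    · rintro x ⟨y, rfl⟩
      simp only [LinearMap.mem_ker, LinearMap.coe_comp, Function.comp_apply,
        Submodule.coe_subtype, Submodule.mkQ_apply, Submodule.Quotient.mk_eq_zero]
      exact ⟨y.val, ((hDval 0 y).trans (hδ0 y.val)).symm⟩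
    · intro x hx
      simp only [LinearMap.mem_ker, LinearMap.coe_comp, Function.comp_apply,
        Submodule.coe_subtype, Submodule.mkQ_apply, Submodule.Quotient.mk_eq_zero] at hx
      obtain ⟨z, hz⟩ := hx
      refine ⟨⟨z, by rw [hStop 1 (by omega)]; trivial⟩, ?_⟩
      apply Subtype.ext
      exact ((hDval 0 _).trans (hδ0 z)).trans hz
  · -- exactness
    intro i
    rcases lt_trichotomy i m with him | him | him
    · -- interior case
      have hamb : LinearMap.range (δ (i+1)) = LinearMap.ker (u (m+1-(i+1))) := by
        rw [hδpos (i+1) (by omega), LinearMap.range_comp,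
          hexact (m+1-(i+2)) (by omega)]
        exact castEquiv_map_ker u (show m+1-(i+1+1)+1 = m+1-(i+1) by omega)
      ext x
      constructor
      · rintro ⟨y, rfl⟩
        rw [LinearMap.mem_ker]
        apply Subtype.ext
        rw [hDval i, hδpos i (by omega)]
        simp only [LinearMap.coe_comp, Function.comp_apply, LinearEquiv.coe_coe,
          ZeroMemClass.coe_zero]
        rw [castEquiv_eq_zero_iff]
        have h1 : ((D (i+1)) y).val ∈ LinearMap.ker (u (m+1-(i+1))) := by
          rw [← hamb]
          exact ⟨y.val, (hDval (i+1) y).symm⟩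
        exact h1
      · intro hx
        rw [LinearMap.mem_ker] at hx
        have hx' : u (m+1-(i+1)) x.val = 0 := by
          have h2 := congrArg Subtype.val hx
          rw [hDval i, hδpos i (by omega)] at h2
          simp only [LinearMap.coe_comp, Function.comp_apply, LinearEquiv.coe_coe,
            ZeroMemClass.coe_zero] at h2
          rwa [castEquiv_eq_zero_iff] at h2
        have h3 : x.val ∈ LinearMap.range (δ (i+1)) := by
          rw [hamb]
          exact hx'
        obtain ⟨z, hz⟩ := h3
        refine ⟨⟨z, by rw [hStop (i+2) (by omega)]; trivial⟩, ?_⟩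
        apply Subtype.ext
        rw [hDval]
        exact hz
    · -- top case : i = m
      have h1 : LinearMap.range (D (i+1)) = ⊥ := by
        haveI := hsub (i+2) (by omega)
        exact range_eq_bot_of_subsingleton _
      have h2 : LinearMap.ker (D i) = ⊥ := by
        rw [Submodule.eq_bot_iff]
        intro x hx
        rw [LinearMap.mem_ker] at hx
        have h2' := congrArg Subtype.val hx
        rw [hDval i, hδpos i (by omega)] at h2'
        simp only [LinearMap.coe_comp, Function.comp_apply, LinearEquiv.coe_coe,
          ZeroMemClass.coe_zero] at h2'
        rw [castEquiv_eq_zero_iff] at h2'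
        have hinj0 : Function.Injective (u (m+1-(i+1))) :=
          u_inj_congr u (show m+1-(i+1) = 0 by omega) (hinj (by omega))
        have h3 : x.val = 0 := by
          apply hinj0
          rw [h2', map_zero]
        exact Subtype.ext h3
      rw [h1, h2]
    · -- degenerate case : m < i
      haveI := hsub (i+1) (by omega)
      exact submodule_eq_of_subsingleton _ _
  · -- projectivity in low degrees
    intro i hi
    have hp : Module.Projective R (H (m+1-i)) := hproj (m+1-i) (by omega) (by omega)
    have eq1 : H (m+1-i) ≃ₗ[R] ↥(Sf i) :=
      (Submodule.topEquiv).symm.trans (LinearEquiv.ofEq _ _ (hStop i (by omega)).symm)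
    exact Module.Projective.of_equiv eq1
  · -- identification of the top term with A
    exact ⟨e.trans ((castEquiv H (show 0 = m+1-(m+1) by omega)).trans
      ((Submodule.topEquiv).symm.trans (LinearEquiv.ofEq _ _ (hStop (m+1) le_rfl).symm)))⟩

lemma gsyz_of_gorenstein {n : ℕ} (hn : 0 < n) {A : Type u} [AddCommGroup A] [Module R A]
    (h : IsGorensteinNSyzygy R n A) : GSyz R n A := by
  obtain ⟨M, aM, mM, E, hGP, ⟨e⟩⟩ := h
  have T : ∀ k : ℕ, k + 1 ≤ n → GSyz R (k+1) ↥(LinearMap.range (E.d k)) := by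
    intro k
    induction k with
    | zero =>
      intro h1
      exact ⟨E.G 0, inferInstance, inferInstance, (LinearMap.range (E.d 0)).subtype,
        hGP 0 h1, Submodule.injective_subtype _, trivial⟩
    | succ k ihk =>
      intro h1
      refine ⟨E.G (k+1), inferInstance, inferInstance,
        (LinearMap.range (E.d (k+1))).subtype, hGP (k+1) (by omega),
        Submodule.injective_subtype _, ?_⟩
      have hr : LinearMap.range (LinearMap.range (E.d (k+1))).subtype
          = LinearMap.ker (E.d k) := by
        rw [Submodule.range_subtype]
        exact E.exact k
      rw [hr]
      exact gsyz_congr (E.d k).quotKerEquivRange.symm (ihk (by omega))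
  obtain ⟨m, rfl⟩ : ∃ m, n = m + 1 := ⟨n - 1, by omega⟩
  have hinjd : Function.Injective (E.d m) := by
    rw [← LinearMap.ker_eq_bot, ← E.exact m]
    haveI : Subsingleton (E.G (m+1+1)) := E.trivial_of_gt _ (by omega)
    exact range_eq_bot_of_subsingleton _
  exact gsyz_congr (e.trans (LinearEquiv.ofInjective (E.d m) hinjd)).symm
    (T m le_rfl)

end GorSyzAux

/-- For any ring `R` and positive integer `n`, a left `R`-module is an
`n`-syzygy module if and only if it is a Gorenstein `n`-syzygy module. -/
theorem isNSyzygy_iff_isGorensteinNSyzygy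
    (R : Type u) [Ring R] (n : ℕ) (hn : 0 < n)
    (A : Type u) [AddCommGroup A] [Module R A] :
    IsNSyzygy R n A ↔ IsGorensteinNSyzygy R n A := by
  constructor
  · rintro ⟨M, aM, mM, E, hproj, he⟩
    exact ⟨M, aM, mM, E, fun i hi => GorSyzAux.gp_of_projective (hproj i hi), he⟩
  · intro h
    have h1 : GSyz R n A := GorSyzAux.gsyz_of_gorenstein hn h
    have hsub : Subsingleton (A ⧸ LinearMap.range (LinearMap.id : A →ₗ[R] A)) := by
      rw [Submodule.Quotient.subsingleton_iff, LinearMap.range_id]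
    haveI := hsub
    have h2 : PSyz R n A :=
      GorSyzAux.main_step n A A LinearMap.id (fun a b hab => hab)
        GorSyzAux.isX_of_subsingleton h1
    exact GorSyzAux.isNSyzygy_of_psyz hn h2
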